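/- arXiv:1803.03295 — 2 statements merged into one kernel-verified Lean document; each statement's English description precedes it below -/
import Mathlib

section
/- Let (C_k)_{k∈ℕ} be independent, mean-zero, real random variables and (a_{k,n})_{k,n∈ℕ} deterministic coefficients with |a_{k,n} C_k| ≤ b_{k,n} almost surely, where b_{k,n} ≤ C k^γ / n for constants C > 0 and 0 < γ < 1/2. Then for every N ∈ ℕ, E[(Σ_{k=1}^n a_{k,n} C_k)^{2N}] ≤ c_N n^{N(2γ-1)} for some constant c_N depending only on N, C, γ. -/
open MeasureTheory ProbabilityTheory Filter

open Finset in

private lemma aux_prod_indep {Ω : Type*} [MeasureSpace Ω] [IsProbabilityMeasure (ℙ : Measure Ω)]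
    (Z : ℕ → Ω → ℝ) (hZmeas : ∀ k, Measurable (Z k))
    (hZindep : iIndepFun Z ℙ) :
    ∀ t : Finset ℕ, (∀ k ∈ t, Integrable (Z k) ℙ) →
      Integrable (fun ω => ∏ k ∈ t, Z k ω) ℙ ∧
      ∫ ω, ∏ k ∈ t, Z k ω ∂ℙ = ∏ k ∈ t, ∫ ω, Z k ω ∂ℙ := by
  intro t
  induction t using Finset.induction_on with
  | empty => intro _; simp
  | @insert k t hk ih =>
    intro hint
    have hkInt : Integrable (Z k) ℙ := hint k (Finset.mem_insert_self k t)
    have htInt : ∀ j ∈ t, Integrable (Z j) ℙ := fun j hj => hint j (Finset.mem_insert_of_mem hj)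
    obtain ⟨ih1, ih2⟩ := ih htInt
    have heq : (∏ j ∈ t, Z j) = fun ω => ∏ j ∈ t, Z j ω := by
      funext ω; exact Finset.prod_apply ω t Z
    have hIndep : IndepFun (∏ j ∈ t, Z j) (Z k) ℙ :=
      hZindep.indepFun_finsetProd_of_notMem hZmeas hk
    have hprodInt : Integrable (∏ j ∈ t, Z j) ℙ := heq ▸ ih1
    have hmulInt : Integrable ((∏ j ∈ t, Z j) * Z k) ℙ := hIndep.integrable_mul hprodInt hkInt
    have hmul : integral ℙ ((∏ j ∈ t, Z j) * Z k)
        = integral ℙ (∏ j ∈ t, Z j) * integral ℙ (Z k) :=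
      hIndep.integral_mul_eq_mul_integral hprodInt.aestronglyMeasurable hkInt.aestronglyMeasurable
    have h2 : (fun ω => ∏ j ∈ insert k t, Z j ω) = (∏ j ∈ t, Z j) * Z k := by
      funext ω
      simp [Finset.prod_insert hk, heq, mul_comm]
    constructor
    · rw [h2]; exact hmulInt
    · have e1 : ∫ ω, ∏ j ∈ insert k t, Z j ω ∂ℙ = integral ℙ ((∏ j ∈ t, Z j) * Z k) := by
        rw [← h2]
      have e2 : integral ℙ (∏ j ∈ t, Z j) = ∫ ω, ∏ j ∈ t, Z j ω ∂ℙ := by rw [heq]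
      rw [e1, hmul, e2, ih2, Finset.prod_insert hk, mul_comm]

private lemma aux_count (n N : ℕ) (hn : 1 ≤ n) [DecidablePred (fun g : Fin (2*N) → ℕ => ∀ i, ∃ j, j ≠ i ∧ g j = g i)] :
    ((Fintype.piFinset (fun _ : Fin (2*N) => Finset.Icc 1 n)).filter
      (fun g => ∀ i, ∃ j, j ≠ i ∧ g j = g i)).card ≤ (N+1) * n^N * N^(2*N) := by
  classical
  set s := Finset.Icc 1 n with hs
  set K := Fintype.piFinset (fun _ : Fin (2*N) => s) with hK
  -- image cardinality bound
  have himg : ∀ g : Fin (2*N) → ℕ, (∀ i, ∃ j, j ≠ i ∧ g j = g i) → (Finset.image g Finset.univ).card ≤ N := by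
    intro g hg
    have h2 : ∀ b ∈ Finset.image g Finset.univ,
        2 ≤ (Finset.univ.filter (fun a => g a = b)).card := by
      intro b hb
      obtain ⟨i, -, rfl⟩ := Finset.mem_image.mp hb
      obtain ⟨j, hji, hgj⟩ := hg i
      refine Finset.one_lt_card.mpr ⟨j, ?_, i, ?_, hji⟩
      · simp [hgj]
      · simp
    have hcard : (Finset.univ : Finset (Fin (2*N))).card
        = ∑ b ∈ Finset.image g Finset.univ, (Finset.univ.filter (fun a => g a = b)).card :=
      Finset.card_eq_sum_card_image g Finset.univ
    have : 2 * (Finset.image g Finset.univ).card ≤ 2 * N := by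
      calc 2 * (Finset.image g Finset.univ).card
          = ∑ _b ∈ Finset.image g Finset.univ, 2 := by
            rw [Finset.sum_const, smul_eq_mul, mul_comm]
        _ ≤ ∑ b ∈ Finset.image g Finset.univ, (Finset.univ.filter (fun a => g a = b)).card :=
            Finset.sum_le_sum h2
        _ = 2 * N := by rw [← hcard]; simp
    omega
  -- subset of biUnion over small subsets
  set T := s.powerset.filter (fun t => t.card ≤ N) with hT
  have hsub : K.filter (fun g => ∀ i, ∃ j, j ≠ i ∧ g j = g i) ⊆ T.biUnion (fun t => Fintype.piFinset (fun _ : Fin (2*N) => t)) := by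
    intro g hg
    obtain ⟨hgK, hgP⟩ := Finset.mem_filter.mp hg
    refine Finset.mem_biUnion.mpr ⟨Finset.image g Finset.univ, ?_, ?_⟩
    · refine Finset.mem_filter.mpr ⟨Finset.mem_powerset.mpr ?_, himg g hgP⟩
      intro b hb
      obtain ⟨i, -, rfl⟩ := Finset.mem_image.mp hb
      exact Fintype.mem_piFinset.mp hgK i
    · exact Fintype.mem_piFinset.mpr (fun i => Finset.mem_image_of_mem g (Finset.mem_univ i))
  have hTcard : T.card ≤ (N+1) * n^N := by
    have h1 : T ⊆ (Finset.range (N+1)).biUnion (fun j => s.powersetCard j) := by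
      intro t ht
      obtain ⟨htp, htc⟩ := Finset.mem_filter.mp ht
      exact Finset.mem_biUnion.mpr ⟨t.card, Finset.mem_range.mpr (Nat.lt_succ_of_le htc),
        Finset.mem_powersetCard.mpr ⟨Finset.mem_powerset.mp htp, rfl⟩⟩
    calc T.card ≤ ∑ j ∈ Finset.range (N+1), (s.powersetCard j).card :=
          le_trans (Finset.card_le_card h1) (Finset.card_biUnion_le)
      _ ≤ ∑ _j ∈ Finset.range (N+1), n^N := by
          refine Finset.sum_le_sum ?_
          intro j hj
          rw [Finset.card_powersetCard]
          have hscard : s.card = n := by rw [hs, Nat.card_Icc]; omega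
          rw [hscard]
          calc n.choose j ≤ n^j := Nat.choose_le_pow n j
            _ ≤ n^N := Nat.pow_le_pow_right hn (Nat.lt_succ_iff.mp (Finset.mem_range.mp hj))
      _ = (N+1) * n^N := by rw [Finset.sum_const, Finset.card_range, smul_eq_mul]
  calc (K.filter (fun g => ∀ i, ∃ j, j ≠ i ∧ g j = g i)).card
      ≤ (T.biUnion (fun t => Fintype.piFinset (fun _ : Fin (2*N) => t))).card :=
        Finset.card_le_card hsub
    _ ≤ ∑ t ∈ T, (Fintype.piFinset (fun _ : Fin (2*N) => t)).card := Finset.card_biUnion_le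
    _ ≤ ∑ _t ∈ T, N^(2*N) := by
        refine Finset.sum_le_sum ?_
        intro t ht
        obtain ⟨-, htc⟩ := Finset.mem_filter.mp ht
        rw [Fintype.card_piFinset]
        calc ∏ _i : Fin (2*N), t.card = t.card^(2*N) := by
              rw [Finset.prod_const]; simp
          _ ≤ N^(2*N) := Nat.pow_le_pow_left htc _
    _ = T.card * N^(2*N) := by rw [Finset.sum_const, smul_eq_mul]
    _ ≤ (N+1) * n^N * N^(2*N) := Nat.mul_le_mul_right _ hTcard

/-- Moment bound for weighted sums of independent centered bounded variables
(estimate (2.10) of the paper). -/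
theorem stmt_2 {Ω : Type*} [MeasureSpace Ω] [IsProbabilityMeasure (ℙ : Measure Ω)]
    (Ck : ℕ → Ω → ℝ)
    (hmeas : ∀ k, Measurable (Ck k))
    (hindep : iIndepFun Ck ℙ)
    (hint : ∀ k, Integrable (Ck k) ℙ)
    (hmean : ∀ k, ∫ ω, Ck k ω ∂ℙ = 0)
    (a b : ℕ → ℕ → ℝ) (C γ : ℝ) (hC : 0 < C) (hγ0 : 0 < γ) (hγ : γ < 1 / 2)
    (hab : ∀ k n : ℕ, k ≤ n → ∀ᵐ ω ∂ℙ, |a k n * Ck k ω| ≤ b k n)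
    (hb : ∀ k n : ℕ, k ≤ n → b k n ≤ C * (k : ℝ) ^ γ / n) :
    ∀ N : ℕ, ∃ c : ℝ, ∀ n : ℕ, 1 ≤ n →
      ∫ ω, (∑ k ∈ Finset.Icc 1 n, a k n * Ck k ω) ^ (2 * N) ∂ℙ
        ≤ c * (n : ℝ) ^ ((N : ℝ) * (2 * γ - 1)) := by
  intro N
  classical
  refine ⟨((N:ℝ)+1) * (N:ℝ)^(2*N) * C^(2*N), ?_⟩
  intro n hn
  have hx0 : (0:ℝ) < n := by exact_mod_cast hn
  set s := Finset.Icc 1 n with hs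
  set Y : ℕ → Ω → ℝ := fun k ω => a k n * Ck k ω with hY
  set D : ℝ := C * (n:ℝ)^γ / n with hD
  have hD0 : 0 ≤ D := by
    rw [hD]; positivity
  have hYb : ∀ k ∈ s, ∀ᵐ ω ∂ℙ, |Y k ω| ≤ D := by
    intro k hk
    obtain ⟨hk1, hkn⟩ := Finset.mem_Icc.mp hk
    filter_upwards [hab k n hkn] with ω hω
    refine hω.trans ((hb k n hkn).trans ?_)
    rw [hD]
    have hkr : (k:ℝ)^γ ≤ (n:ℝ)^γ :=
      Real.rpow_le_rpow (by positivity) (by exact_mod_cast hkn) hγ0.le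
    gcongr
  have hYmeas : ∀ k, Measurable (Y k) := fun k => (hmeas k).const_mul _
  set K := Fintype.piFinset (fun _ : Fin (2*N) => s) with hK
  have hprodmeas : ∀ g : Fin (2*N) → ℕ, Measurable (fun ω => ∏ i, Y (g i) ω) := by
    intro g; exact Finset.measurable_prod _ (fun i _ => hYmeas (g i))
  have hprodbound : ∀ g ∈ K, ∀ᵐ ω ∂ℙ, |∏ i, Y (g i) ω| ≤ D^(2*N) := by
    intro g hg
    have hae : ∀ᵐ ω ∂ℙ, ∀ i : Fin (2*N), |Y (g i) ω| ≤ D := by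
      rw [Filter.eventually_all]
      exact fun i => hYb (g i) (Fintype.mem_piFinset.mp hg i)
    filter_upwards [hae] with ω hω
    calc |∏ i, Y (g i) ω| = ∏ i, |Y (g i) ω| := Finset.abs_prod _ _
      _ ≤ ∏ _i : Fin (2*N), D :=
          Finset.prod_le_prod (fun i _ => abs_nonneg _) (fun i _ => hω i)
      _ = D^(2*N) := by rw [Finset.prod_const]; simp
  have hprodint : ∀ g ∈ K, Integrable (fun ω => ∏ i, Y (g i) ω) ℙ := by
    intro g hg
    exact (integrable_const (D^(2*N))).mono' (hprodmeas g).aestronglyMeasurable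
      ((hprodbound g hg).mono (fun ω h => by rw [Real.norm_eq_abs]; exact h))
  have hexp1 : ∀ ω, (∑ k ∈ s, Y k ω)^(2*N) = ∑ g ∈ K, ∏ i : Fin (2*N), Y (g i) ω := by
    intro ω
    rw [← Fin.prod_const (2*N) (∑ k ∈ s, Y k ω)]
    exact Finset.prod_univ_sum (fun _ => s) (fun _ k => Y k ω)
  have hbad : ∀ g ∈ K, ¬(∀ i, ∃ j, j ≠ i ∧ g j = g i) →
      ∫ ω, ∏ i, Y (g i) ω ∂ℙ = 0 := by
    intro g hgK hgP
    push_neg at hgP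
    obtain ⟨i0, hi0⟩ := hgP
    set m : ℕ → ℕ := fun c => (Finset.univ.filter (fun a : Fin (2*N) => g a = c)).card with hm
    set Z : ℕ → Ω → ℝ := fun c ω => (a c n * Ck c ω)^(m c) with hZ
    have hZmeas : ∀ c, Measurable (Z c) := fun c => ((hmeas c).const_mul _).pow_const _
    have hZindep : iIndepFun Z ℙ :=
      hindep.comp (fun c x => (a c n * x)^(m c))
        (fun c => (measurable_id.const_mul _).pow_const _)
    have hZint : ∀ c ∈ Finset.image g Finset.univ, Integrable (Z c) ℙ := by
      intro c hc
      obtain ⟨i, -, rfl⟩ := Finset.mem_image.mp hc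
      have hbs : g i ∈ s := Fintype.mem_piFinset.mp hgK i
      refine (integrable_const (D^(m (g i)))).mono' (hZmeas _).aestronglyMeasurable ?_
      filter_upwards [hYb (g i) hbs] with ω hω
      rw [Real.norm_eq_abs]
      calc |Z (g i) ω| = |Y (g i) ω|^(m (g i)) := abs_pow _ _
        _ ≤ D^(m (g i)) := pow_le_pow_left₀ (abs_nonneg _) hω _
    obtain ⟨-, hint2⟩ :=
      aux_prod_indep Z hZmeas hZindep (Finset.image g Finset.univ) hZint
    have hfib : (Finset.univ.filter (fun j : Fin (2*N) => g j = g i0)) = {i0} := by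
      ext j
      simp only [Finset.mem_filter, Finset.mem_univ, true_and, Finset.mem_singleton]
      constructor
      · intro h; by_contra hne; exact hi0 j hne h
      · rintro rfl; rfl
    have hm1 : m (g i0) = 1 := by rw [hm]; simp only [hfib, Finset.card_singleton]
    have hZ0 : ∫ ω, Z (g i0) ω ∂ℙ = 0 := by
      simp only [hZ, hm1, pow_one]
      rw [MeasureTheory.integral_const_mul, hmean, mul_zero]
    calc ∫ ω, ∏ i, Y (g i) ω ∂ℙ
        = ∫ ω, ∏ c ∈ Finset.image g Finset.univ, Z c ω ∂ℙ := by
          refine congrArg (integral ℙ) (funext fun ω => ?_)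
          exact Finset.prod_comp (fun c => Y c ω) g
      _ = ∏ c ∈ Finset.image g Finset.univ, ∫ ω, Z c ω ∂ℙ := hint2
      _ = 0 := Finset.prod_eq_zero (Finset.mem_image_of_mem g (Finset.mem_univ i0)) hZ0
  have hgood : ∀ g ∈ K, ∫ ω, ∏ i, Y (g i) ω ∂ℙ ≤ D^(2*N) := by
    intro g hg
    have hb2 : ∀ᵐ ω ∂ℙ, (∏ i, Y (g i) ω) ≤ D^(2*N) := by
      filter_upwards [hprodbound g hg] with ω hω
      exact (le_abs_self _).trans hω
    calc ∫ ω, ∏ i, Y (g i) ω ∂ℙ ≤ ∫ _ω, D^(2*N) ∂ℙ :=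
          integral_mono_ae (hprodint g hg) (integrable_const _) hb2
      _ = D^(2*N) := by simp
  have hcount := aux_count n N hn
  have hsplit : ∑ g ∈ K, ∫ ω, ∏ i, Y (g i) ω ∂ℙ
      = ∑ g ∈ K.filter (fun g => ∀ i, ∃ j, j ≠ i ∧ g j = g i), ∫ ω, ∏ i, Y (g i) ω ∂ℙ := by
    have hz : ∑ g ∈ K.filter (fun g => ¬ ∀ i, ∃ j, j ≠ i ∧ g j = g i),
        ∫ ω, ∏ i, Y (g i) ω ∂ℙ = 0 := by
      refine Finset.sum_eq_zero (fun g hg => ?_)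
      obtain ⟨h1, h2⟩ := Finset.mem_filter.mp hg
      exact hbad g h1 h2
    rw [← Finset.sum_filter_add_sum_filter_not K (fun g => ∀ i, ∃ j, j ≠ i ∧ g j = g i), hz,
      add_zero]
  have key : (n:ℝ)^(N:ℕ) * ((n:ℝ)^γ)^(2*N) / (n:ℝ)^(2*N)
      = (n:ℝ)^((N:ℝ)*(2*γ-1)) := by
    rw [← Real.rpow_natCast ((n:ℝ)) N, ← Real.rpow_natCast ((n:ℝ)^γ) (2*N),
      ← Real.rpow_natCast ((n:ℝ)) (2*N), ← Real.rpow_mul hx0.le,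
      ← Real.rpow_add hx0, ← Real.rpow_sub hx0]
    congr 1
    push_cast
    ring
  have hfinal : (((N+1) * n^N * N^(2*N) : ℕ) : ℝ) * D^(2*N)
      = (((N:ℝ)+1) * (N:ℝ)^(2*N) * C^(2*N)) * (n:ℝ)^((N:ℝ)*(2*γ-1)) := by
    rw [hD, ← key]
    push_cast
    rw [div_pow, mul_pow]
    field_simp
  show ∫ ω, (∑ k ∈ s, Y k ω)^(2*N) ∂ℙ ≤ _
  calc ∫ ω, (∑ k ∈ s, Y k ω)^(2*N) ∂ℙ
      = ∫ ω, ∑ g ∈ K, ∏ i, Y (g i) ω ∂ℙ := by simp only [hexp1]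
    _ = ∑ g ∈ K, ∫ ω, ∏ i, Y (g i) ω ∂ℙ :=
        integral_finset_sum K (fun g hg => hprodint g hg)
    _ = ∑ g ∈ K.filter (fun g => ∀ i, ∃ j, j ≠ i ∧ g j = g i),
          ∫ ω, ∏ i, Y (g i) ω ∂ℙ := hsplit
    _ ≤ (K.filter (fun g => ∀ i, ∃ j, j ≠ i ∧ g j = g i)).card • D^(2*N) :=
        Finset.sum_le_card_nsmul _ _ _ (fun g hg => hgood g (Finset.mem_filter.mp hg).1)
    _ = ((K.filter (fun g => ∀ i, ∃ j, j ≠ i ∧ g j = g i)).card : ℝ) * D^(2*N) :=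
        nsmul_eq_mul _ _
    _ ≤ (((N+1) * n^N * N^(2*N) : ℕ) : ℝ) * D^(2*N) := by
        refine mul_le_mul_of_nonneg_right ?_ (pow_nonneg hD0 _)
        exact_mod_cast hcount
    _ = _ := hfinal
end

section
/- Let (C_k)_{k∈ℕ} be independent, mean-zero random variables with |a_{k,n} C_k| ≤ C k^γ / n almost surely for 0 < γ < 1/2. Then for every ε > 0, Σ_n P(|Σ_{k=1}^n a_{k,n} C_k| > ε) < ∞, and consequently limsup_{n→∞} |Σ_{k=1}^n a_{k,n} C_k| ≤ ε almost surely; since ε is arbitrary, the sum converges to 0 almost surely. -/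
open MeasureTheory ProbabilityTheory Filter Real

lemma exp_le_convex {t c x : ℝ} (hc : 0 < c) (hx : |x| ≤ c) :
    Real.exp (t * x) ≤ Real.cosh (t * c) + Real.sinh (t * c) * (x / c) := by
  have hx1 : -c ≤ x := (abs_le.1 hx).1
  have hx2 : x ≤ c := (abs_le.1 hx).2
  set A : ℝ := (c - x) / (2 * c) with hA
  set B : ℝ := (c + x) / (2 * c) with hB
  have hA0 : 0 ≤ A := by apply div_nonneg <;> linarith
  have hB0 : 0 ≤ B := by apply div_nonneg <;> linarith
  have hAB : A + B = 1 := by rw [hA, hB]; field_simp; ring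
  have h := convexOn_exp.2 (Set.mem_univ (t * (-c))) (Set.mem_univ (t * c)) hA0 hB0 hAB
  simp only [smul_eq_mul] at h
  have harg : A * (t * (-c)) + B * (t * c) = t * x := by
    rw [hA, hB]; field_simp; ring
  rw [harg] at h
  refine h.trans_eq ?_
  rw [Real.cosh_eq, Real.sinh_eq, mul_neg, Real.exp_neg, hA, hB]
  have h1 : rexp (t*c) ≠ 0 := (Real.exp_pos _).ne'
  field_simp
  ring

lemma integrable_exp_mul_of_abs_le {Ω : Type*} [MeasurableSpace Ω] {μ : Measure Ω}
    [IsProbabilityMeasure μ] {X : Ω → ℝ} (hX : Measurable X) {c : ℝ}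
    (hb : ∀ᵐ ω ∂μ, |X ω| ≤ c) (t : ℝ) :
    Integrable (fun ω => Real.exp (t * X ω)) μ := by
  refine Integrable.mono' (integrable_const (Real.exp (|t| * c)))
    ((hX.const_mul t).exp.aestronglyMeasurable) ?_
  filter_upwards [hb] with ω h
  rw [Real.norm_eq_abs, abs_of_pos (Real.exp_pos _)]
  refine Real.exp_le_exp.2 ?_
  calc t * X ω ≤ |t * X ω| := le_abs_self _
    _ = |t| * |X ω| := abs_mul _ _
    _ ≤ |t| * c := by
        refine mul_le_mul_of_nonneg_left h (abs_nonneg _)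

lemma mgf_le_cosh {Ω : Type*} [MeasurableSpace Ω] {μ : Measure Ω} [IsProbabilityMeasure μ]
    {X : Ω → ℝ} (hX : Measurable X) (hint : Integrable X μ) (hmean : ∫ ω, X ω ∂μ = 0)
    {c : ℝ} (hc : 0 < c) (hb : ∀ᵐ ω ∂μ, |X ω| ≤ c) (t : ℝ) :
    mgf X μ t ≤ Real.cosh (t * c) := by
  have hexp := integrable_exp_mul_of_abs_le hX hb t
  have hbd : Integrable (fun ω => Real.cosh (t*c) + (Real.sinh (t*c) / c) * X ω) μ :=
    (integrable_const _).add (hint.const_mul _)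
  have hmono : ∫ ω, Real.exp (t * X ω) ∂μ ≤
      ∫ ω, (Real.cosh (t*c) + (Real.sinh (t*c) / c) * X ω) ∂μ := by
    refine integral_mono_ae hexp hbd ?_
    filter_upwards [hb] with ω h
    have := exp_le_convex hc h (t := t)
    calc Real.exp (t * X ω) ≤ Real.cosh (t*c) + Real.sinh (t*c) * (X ω / c) := this
      _ = Real.cosh (t*c) + (Real.sinh (t*c) / c) * X ω := by ring
  have : ∫ ω, (Real.cosh (t*c) + (Real.sinh (t*c) / c) * X ω) ∂μ = Real.cosh (t*c) := by
    rw [integral_add (integrable_const _) (hint.const_mul _), integral_const,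
      integral_const_mul, hmean]
    simp
  rw [mgf]
  exact hmono.trans_eq this

lemma hoeffding_one_sided {Ω : Type*} [MeasurableSpace Ω] {μ : Measure Ω}
    [IsProbabilityMeasure μ] (X : ℕ → Ω → ℝ) (hXm : ∀ k, Measurable (X k))
    (hXi : iIndepFun X μ) (s : Finset ℕ) (c : ℕ → ℝ)
    (hint : ∀ k ∈ s, Integrable (X k) μ) (hmean : ∀ k ∈ s, ∫ ω, X k ω ∂μ = 0)
    (hc : ∀ k ∈ s, 0 < c k) (hb : ∀ k ∈ s, ∀ᵐ ω ∂μ, |X k ω| ≤ c k)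
    {ε : ℝ} (hε : 0 < ε) (hV : 0 < ∑ k ∈ s, (c k)^2) :
    (μ {ω | ε ≤ ∑ k ∈ s, X k ω}).toReal ≤
      Real.exp (-ε^2 / (2 * ∑ k ∈ s, (c k)^2)) := by
  set V := ∑ k ∈ s, (c k)^2 with hVdef
  set t := ε / V with ht
  have ht0 : 0 ≤ t := le_of_lt (div_pos hε hV)
  have hexpint : ∀ k ∈ s, Integrable (fun ω => Real.exp (t * X k ω)) μ := fun k hk =>
    integrable_exp_mul_of_abs_le (hXm k) (hb k hk) t
  have hSint : Integrable (fun ω => Real.exp (t * (∑ k ∈ s, X k) ω)) μ :=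
    hXi.integrable_exp_mul_sum hXm hexpint
  have h1 : (μ {ω | ε ≤ ∑ k ∈ s, X k ω}).toReal ≤
      Real.exp (-t * ε) * mgf (∑ k ∈ s, X k) μ t := by
    have := measure_ge_le_exp_mul_mgf (X := ∑ k ∈ s, X k) (μ := μ) ε ht0 hSint
    simpa [measureReal_def] using this
  have h2 : mgf (∑ k ∈ s, X k) μ t ≤ Real.exp (t^2 * V / 2) := by
    rw [hXi.mgf_sum hXm]
    calc ∏ k ∈ s, mgf (X k) μ t ≤ ∏ k ∈ s, Real.exp (t^2 * (c k)^2 / 2) := by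
          refine Finset.prod_le_prod (fun k _ => mgf_nonneg) (fun k hk => ?_)
          refine (mgf_le_cosh (hXm k) (hint k hk) (hmean k hk) (hc k hk) (hb k hk) t).trans ?_
          refine (Real.cosh_le_exp_half_sq _).trans_eq ?_
          congr 1
          ring
      _ = Real.exp (∑ k ∈ s, t^2 * (c k)^2 / 2) := (Real.exp_sum _ _).symm
      _ = Real.exp (t^2 * V / 2) := by
          congr 1
          rw [hVdef, Finset.mul_sum, Finset.sum_div]
  calc (μ {ω | ε ≤ ∑ k ∈ s, X k ω}).toReal
      ≤ Real.exp (-t * ε) * Real.exp (t^2 * V / 2) := by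
        refine h1.trans ?_
        exact mul_le_mul_of_nonneg_left h2 (Real.exp_pos _).le
    _ = Real.exp (-ε^2 / (2 * V)) := by
        rw [← Real.exp_add]
        congr 1
        rw [ht]
        field_simp
        ring

lemma summable_exp_neg_rpow {c δ : ℝ} (hc : 0 < c) (hδ : 0 < δ) :
    Summable (fun n : ℕ => Real.exp (-(c * (n:ℝ) ^ δ))) := by
  set m : ℕ := ⌈2 / δ⌉₊ with hm
  have hmδ : 2 ≤ δ * m := by
    have h1 : 2 / δ ≤ (m : ℝ) := Nat.le_ceil _
    calc (2:ℝ) = δ * (2/δ) := by field_simp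
      _ ≤ δ * m := by exact mul_le_mul_of_nonneg_left h1 hδ.le
  have key : ∀ n : ℕ, 1 ≤ n →
      Real.exp (-(c * (n:ℝ) ^ δ)) ≤ (m.factorial / c ^ m) * (n:ℝ) ^ (-2 : ℝ) := by
    intro n hn
    have hn1 : (1:ℝ) ≤ (n:ℝ) := by exact_mod_cast hn
    have hx0 : (0:ℝ) < (n:ℝ) ^ δ := Real.rpow_pos_of_pos (by linarith) δ
    set x := c * (n:ℝ) ^ δ with hx
    have hxpos : 0 < x := mul_pos hc hx0
    -- x ^ m / m! ≤ exp x
    have hpow : x ^ m / m.factorial ≤ Real.exp x := by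
      have hs := Real.sum_le_exp_of_nonneg hxpos.le (m + 1)
      refine le_trans ?_ hs
      have := Finset.single_le_sum (f := fun i => x ^ i / i.factorial)
        (fun i _ => by positivity) (Finset.self_mem_range_succ m)
      simpa using this
    have hxm : 0 < x ^ m := pow_pos hxpos m
    have hexp_le : Real.exp (-x) ≤ m.factorial / x ^ m := by
      rw [Real.exp_neg, inv_eq_one_div, div_le_div_iff₀ (Real.exp_pos _) hxm]
      have : x ^ m ≤ m.factorial * Real.exp x := by
        rw [div_le_iff₀ (by positivity : (0:ℝ) < (m.factorial:ℝ))] at hpow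
        linarith
      linarith
    refine hexp_le.trans ?_
    have hxmval : x ^ m = c ^ m * (n:ℝ) ^ (δ * m) := by
      rw [hx, mul_pow, ← Real.rpow_natCast ((n:ℝ) ^ δ) m, ← Real.rpow_mul (by linarith)]
    have h2 : (n:ℝ) ^ (2:ℝ) ≤ (n:ℝ) ^ (δ * m) :=
      Real.rpow_le_rpow_of_exponent_le hn1 hmδ
    have hcm : (0:ℝ) < c ^ m := pow_pos hc m
    rw [hxmval]
    have hinv : ((n:ℝ) ^ (δ * m))⁻¹ ≤ (n:ℝ) ^ (-2:ℝ) := by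
      rw [show (-2:ℝ) = -(2:ℝ) by norm_num, Real.rpow_neg (by linarith)]
      exact inv_anti₀ (Real.rpow_pos_of_pos (by linarith) _) h2
    calc (m.factorial:ℝ) / (c ^ m * (n:ℝ) ^ (δ * m))
        = ((m.factorial:ℝ) / c ^ m) * ((n:ℝ) ^ (δ * m))⁻¹ := by
          rw [div_mul_eq_div_div, div_eq_mul_inv]
      _ ≤ ((m.factorial:ℝ) / c ^ m) * (n:ℝ) ^ (-2:ℝ) := by
          exact mul_le_mul_of_nonneg_left hinv (by positivity)
  -- comparison
  rw [← summable_nat_add_iff 1]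
  have hbase : Summable (fun n : ℕ => ((m.factorial : ℝ) / c ^ m) * ((n+1:ℕ):ℝ) ^ (-2:ℝ)) := by
    refine Summable.mul_left _ ?_
    exact ((summable_nat_add_iff 1).2 (Real.summable_nat_rpow.mpr (by norm_num)))
  refine Summable.of_nonneg_of_le (fun n => (Real.exp_pos _).le) (fun n => ?_) hbase
  exact key (n+1) (Nat.le_add_left 1 n)

/-- Borel–Cantelli consequence of the moment bound: the weighted sums of independent
centered bounded variables converge to `0` almost surely, with summable tail
probabilities at every level `ε > 0`. -/
theorem stmt_3 {Ω : Type*} [MeasureSpace Ω] [IsProbabilityMeasure (ℙ : Measure Ω)]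
    (Ck : ℕ → Ω → ℝ)
    (hmeas : ∀ k, Measurable (Ck k))
    (hindep : iIndepFun Ck ℙ)
    (hint : ∀ k, Integrable (Ck k) ℙ)
    (hmean : ∀ k, ∫ ω, Ck k ω ∂ℙ = 0)
    (a : ℕ → ℕ → ℝ) (C γ : ℝ) (hC : 0 < C) (hγ0 : 0 < γ) (hγ : γ < 1 / 2)
    (hab : ∀ k n : ℕ, k ≤ n → ∀ᵐ ω ∂ℙ, |a k n * Ck k ω| ≤ C * (k : ℝ) ^ γ / n) :
    (∀ ε : ℝ, 0 < ε →
      Summable fun n : ℕ =>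
        (ℙ {ω | ε < |∑ k ∈ Finset.Icc 1 n, a k n * Ck k ω|}).toReal) ∧
    ∀ᵐ ω ∂ℙ, Tendsto (fun n : ℕ => ∑ k ∈ Finset.Icc 1 n, a k n * Ck k ω)
      atTop (nhds 0) := by
  have hδ : 0 < 1 - 2 * γ := by linarith
  -- the one-sided tail bound for each sign and each n ≥ 1
  have tail_bound : ∀ (σ : ℝ), σ = 1 ∨ σ = -1 → ∀ (ε : ℝ), 0 < ε → ∀ n : ℕ, 1 ≤ n →
      (ℙ {ω | ε ≤ ∑ k ∈ Finset.Icc 1 n, (σ * a k n) * Ck k ω}).toReal ≤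
        Real.exp (-(ε^2 / (2 * C^2) * (n:ℝ) ^ (1 - 2*γ))) := by
    intro σ hσ ε hε n hn
    have hn1 : (1:ℝ) ≤ (n:ℝ) := by exact_mod_cast hn
    have hn0 : (0:ℝ) < (n:ℝ) := by linarith
    set c : ℕ → ℝ := fun k => C * (k:ℝ) ^ γ / n with hcdef
    have hcpos : ∀ k ∈ Finset.Icc 1 n, 0 < c k := by
      intro k hk
      obtain ⟨hk1, -⟩ := Finset.mem_Icc.1 hk
      have : (0:ℝ) < (k:ℝ) := by exact_mod_cast hk1
      exact div_pos (mul_pos hC (Real.rpow_pos_of_pos this γ)) hn0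
    have hb : ∀ k ∈ Finset.Icc 1 n, ∀ᵐ ω ∂ℙ, |(σ * a k n) * Ck k ω| ≤ c k := by
      intro k hk
      obtain ⟨-, hk2⟩ := Finset.mem_Icc.1 hk
      filter_upwards [hab k n hk2] with ω h
      have hσ1 : |σ| = 1 := by rcases hσ with h'|h' <;> simp [h']
      calc |(σ * a k n) * Ck k ω| = |σ| * |a k n * Ck k ω| := by
            rw [mul_assoc, abs_mul]
        _ = |a k n * Ck k ω| := by rw [hσ1, one_mul]
        _ ≤ c k := h
    have hV : 0 < ∑ k ∈ Finset.Icc 1 n, (c k)^2 := by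
      refine Finset.sum_pos (fun k hk => pow_pos (hcpos k hk) 2) ?_
      exact ⟨1, Finset.mem_Icc.2 ⟨le_refl 1, hn⟩⟩
    have hindep' : iIndepFun
        (fun k => fun ω => (σ * a k n) * Ck k ω) ℙ :=
      hindep.comp (fun k => fun x => (σ * a k n) * x) (fun k => measurable_const_mul _)
    have H := hoeffding_one_sided (μ := ℙ) (fun k ω => (σ * a k n) * Ck k ω)
      (fun k => (hmeas k).const_mul _) hindep' (Finset.Icc 1 n) c
      (fun k _ => (hint k).const_mul _)
      (fun k _ => by rw [integral_const_mul, hmean k, mul_zero]) hcpos hb hε hV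
    refine H.trans ?_
    -- V ≤ C^2 * n^(2γ-1)
    have hVle : ∑ k ∈ Finset.Icc 1 n, (c k)^2 ≤ C^2 * (n:ℝ) ^ (2*γ - 1) := by
      have hterm : ∀ k ∈ Finset.Icc 1 n, (c k)^2 ≤ C^2 * (n:ℝ) ^ (2*γ) / (n:ℝ)^2 := by
        intro k hk
        obtain ⟨hk1, hk2⟩ := Finset.mem_Icc.1 hk
        have hkpos : (0:ℝ) < (k:ℝ) := by exact_mod_cast hk1
        have hkn : (k:ℝ) ≤ (n:ℝ) := by exact_mod_cast hk2
        have h1 : ((k:ℝ) ^ γ)^2 = (k:ℝ) ^ (2*γ) := by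
          rw [← Real.rpow_natCast ((k:ℝ)^γ) 2, ← Real.rpow_mul hkpos.le]
          norm_num [mul_comm]
        have h2 : (k:ℝ) ^ (2*γ) ≤ (n:ℝ) ^ (2*γ) :=
          Real.rpow_le_rpow hkpos.le hkn (by linarith)
        calc (c k)^2 = C^2 * ((k:ℝ)^γ)^2 / (n:ℝ)^2 := by
              rw [hcdef]; field_simp
          _ = C^2 * (k:ℝ) ^ (2*γ) / (n:ℝ)^2 := by rw [h1]
          _ ≤ C^2 * (n:ℝ) ^ (2*γ) / (n:ℝ)^2 := by
              apply div_le_div_of_nonneg_right ?_ (by positivity)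
              · exact mul_le_mul_of_nonneg_left h2 (by positivity)
      calc ∑ k ∈ Finset.Icc 1 n, (c k)^2 ≤
            ∑ k ∈ Finset.Icc 1 n, C^2 * (n:ℝ) ^ (2*γ) / (n:ℝ)^2 :=
            Finset.sum_le_sum hterm
        _ = n * (C^2 * (n:ℝ) ^ (2*γ) / (n:ℝ)^2) := by
            rw [Finset.sum_const, Nat.card_Icc]
            simp [nsmul_eq_mul]
        _ = C^2 * (n:ℝ) ^ (2*γ - 1) := by
            rw [show (2*γ - 1 : ℝ) = 2*γ + (-1) by ring,
              Real.rpow_add hn0, Real.rpow_neg_one]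
            field_simp
    have hB : (0:ℝ) < C^2 * (n:ℝ) ^ (2*γ - 1) :=
      mul_pos (by positivity) (Real.rpow_pos_of_pos hn0 _)
    refine Real.exp_le_exp.2 ?_
    have h3 : ε^2 / (2 * (C^2 * (n:ℝ)^(2*γ-1))) ≤ ε^2 / (2 * ∑ k ∈ Finset.Icc 1 n, (c k)^2) := by
      apply div_le_div_of_nonneg_left (by positivity) (by linarith) (by linarith)
    have h4 : ε^2 / (2 * (C^2 * (n:ℝ)^(2*γ-1))) = ε^2/(2*C^2) * (n:ℝ)^(1-2*γ) := by
      rw [show (1 - 2*γ : ℝ) = -(2*γ - 1) by ring, Real.rpow_neg hn0.le]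
      have := (Real.rpow_pos_of_pos hn0 (2*γ-1)).ne'
      field_simp
    rw [neg_div, ← h4]
    linarith
  -- Part A : summable tails
  have hA : ∀ ε : ℝ, 0 < ε →
      Summable fun n : ℕ =>
        (ℙ {ω | ε < |∑ k ∈ Finset.Icc 1 n, a k n * Ck k ω|}).toReal := by
    intro ε hε
    have hsummable := (summable_exp_neg_rpow (c := ε^2/(2*C^2)) (by positivity) hδ).mul_left 2
    refine Summable.of_nonneg_of_le (fun n => ENNReal.toReal_nonneg) (fun n => ?_) hsummable
    rcases Nat.eq_zero_or_pos n with rfl | hn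
    · have h0 : ((0:ℕ):ℝ) ^ (1-2*γ) = 0 := by
        rw [Nat.cast_zero, Real.zero_rpow hδ.ne']
      rw [h0, mul_zero, neg_zero, Real.exp_zero, mul_one]
      have h1 : (ℙ {ω : Ω | ε < |∑ k ∈ Finset.Icc 1 0, a k 0 * Ck k ω|}).toReal ≤
          (1 : ENNReal).toReal := ENNReal.toReal_mono ENNReal.one_ne_top prob_le_one
      rw [ENNReal.toReal_one] at h1
      exact h1.trans (by norm_num)
    · set A := {ω : Ω | ε ≤ ∑ k ∈ Finset.Icc 1 n, ((1:ℝ) * a k n) * Ck k ω} with hAdef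
      set B := {ω : Ω | ε ≤ ∑ k ∈ Finset.Icc 1 n, ((-1:ℝ) * a k n) * Ck k ω} with hBdef
      have hsub : {ω | ε < |∑ k ∈ Finset.Icc 1 n, a k n * Ck k ω|} ⊆ A ∪ B := by
        intro ω hω
        simp only [Set.mem_setOf_eq] at hω
        rcases lt_abs.1 hω with h | h
        · left
          simp only [hAdef, Set.mem_setOf_eq, one_mul]
          exact h.le
        · right
          simp only [hBdef, Set.mem_setOf_eq, neg_one_mul, neg_mul, one_mul, Finset.sum_neg_distrib]
          linarith
      have hu : (ℙ {ω | ε < |∑ k ∈ Finset.Icc 1 n, a k n * Ck k ω|}).toReal ≤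
          (ℙ A).toReal + (ℙ B).toReal := by
        calc (ℙ {ω | ε < |∑ k ∈ Finset.Icc 1 n, a k n * Ck k ω|}).toReal
            ≤ (ℙ (A ∪ B)).toReal :=
              ENNReal.toReal_mono (measure_ne_top _ _) (measure_mono hsub)
          _ ≤ (ℙ A + ℙ B).toReal :=
              ENNReal.toReal_mono (by finiteness) (measure_union_le _ _)
          _ = (ℙ A).toReal + (ℙ B).toReal :=
              ENNReal.toReal_add (measure_ne_top _ _) (measure_ne_top _ _)
      have h1 := tail_bound 1 (Or.inl rfl) ε hε n hn
      have h2 := tail_bound (-1) (Or.inr rfl) ε hε n hn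
      calc (ℙ {ω | ε < |∑ k ∈ Finset.Icc 1 n, a k n * Ck k ω|}).toReal
          ≤ (ℙ A).toReal + (ℙ B).toReal := hu
        _ ≤ Real.exp (-(ε^2 / (2 * C^2) * (n:ℝ) ^ (1 - 2*γ))) +
            Real.exp (-(ε^2 / (2 * C^2) * (n:ℝ) ^ (1 - 2*γ))) := add_le_add h1 h2
        _ = 2 * Real.exp (-(ε^2 / (2 * C^2) * (n:ℝ) ^ (1 - 2*γ))) := by ring
  refine ⟨hA, ?_⟩
  -- Part B : almost sure convergence
  have hae : ∀ m : ℕ, ∀ᵐ ω ∂ℙ, ∀ᶠ n in atTop,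
      ω ∉ {ω : Ω | 1/((m:ℝ)+1) < |∑ k ∈ Finset.Icc 1 n, a k n * Ck k ω|} := by
    intro m
    have hεm : (0:ℝ) < 1/((m:ℝ)+1) := by positivity
    have hs := hA _ hεm
    apply ae_eventually_notMem
    have heq : ∑' n, ℙ {ω : Ω | 1/((m:ℝ)+1) < |∑ k ∈ Finset.Icc 1 n, a k n * Ck k ω|} =
        ENNReal.ofReal (∑' n,
          (ℙ {ω : Ω | 1/((m:ℝ)+1) < |∑ k ∈ Finset.Icc 1 n, a k n * Ck k ω|}).toReal) := by
      rw [ENNReal.ofReal_tsum_of_nonneg (fun n => ENNReal.toReal_nonneg) hs]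
      congr 1
      ext n
      rw [ENNReal.ofReal_toReal (measure_ne_top _ _)]
    rw [heq]
    exact ENNReal.ofReal_ne_top
  filter_upwards [ae_all_iff.2 hae] with ω hω
  rw [Metric.tendsto_atTop]
  intro ε hε
  obtain ⟨m, hm⟩ := exists_nat_one_div_lt hε
  obtain ⟨N, hN⟩ := eventually_atTop.1 (hω m)
  refine ⟨N, fun n hn => ?_⟩
  have := hN n hn
  simp only [Set.mem_setOf_eq, not_lt] at this
  rw [Real.dist_eq, sub_zero]
  exact lt_of_le_of_lt this hm
end
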